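/- Let P : ℕ → ℂ be the Pell sequence (P_0 = 0, P_1 = 1, P_n = 2P_{n−1} + P_{n−2} for n ≥ 2) and let r ∈ ℂ. Then the sequence b := T_r P satisfies b_0 = 0, b_1 = 1, and b_n = (2r + 2)·b_{n−1} − (r² + 2r − 1)·b_{n−2} for all n ≥ 2. -/

import Mathlib

/-- Transformed Pell: `b = T_r P` satisfies `b_0 = 0`, `b_1 = 1`, and
`b_n = (2r+2) b_{n-1} - (r²+2r-1) b_{n-2}` for `n ≥ 2`. -/
theorem pell_transform (P : ℕ → ℂ) (hP0 : P 0 = 0) (hP1 : P 1 = 1)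
    (hP : ∀ n, P (n + 2) = 2 * P (n + 1) + P n) (r : ℂ) (b : ℕ → ℂ)
    (hb : ∀ n, b n = ∑ k ∈ Finset.range (n + 1), (n.choose k : ℂ) * r ^ (n - k) * P k) :
    b 0 = 0 ∧ b 1 = 1 ∧
      ∀ n, 2 ≤ n →
        b n = (2 * r + 2) * b (n - 1) - (r ^ 2 + 2 * r - 1) * b (n - 2) := by
  set s : ℂ := ((Real.sqrt 2 : ℝ) : ℂ) with hsdef
  have hs : s ^ 2 = 2 := by
    rw [hsdef]
    norm_cast
    rw [Real.sq_sqrt (by norm_num : (2:ℝ) ≥ 0)]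
  have hs0 : s ≠ 0 := by
    intro h
    have : (2 : ℂ) = 0 := by rw [← hs, h]; ring
    norm_num at this
  have key : ∀ n, P n = ((1 + s) ^ n - (1 - s) ^ n) / (2 * s) := by
    intro n
    induction n using Nat.twoStepInduction with
    | zero => simp [hP0]
    | one => rw [hP1]; field_simp; ring
    | more n ih1 ih2 =>
      rw [hP, ih1, ih2]
      have h1 : (1 + s) ^ 2 = 2 * (1 + s) + 1 := by linear_combination hs
      have h2 : (1 - s) ^ 2 = 2 * (1 - s) + 1 := by linear_combination hs
      field_simp
      linear_combination ((1 - s) ^ n - (1 + s) ^ n) * hs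
  have hbc : ∀ n, b n = ((r + 1 + s) ^ n - (r + 1 - s) ^ n) / (2 * s) := by
    intro n
    rw [hb]
    have step : ∀ k ∈ Finset.range (n + 1),
        (n.choose k : ℂ) * r ^ (n - k) * P k =
          (1 + s) ^ k * r ^ (n - k) * (n.choose k : ℂ) / (2 * s)
            - (1 - s) ^ k * r ^ (n - k) * (n.choose k : ℂ) / (2 * s) := by
      intro k _
      rw [key k]
      field_simp
    rw [Finset.sum_congr rfl step, Finset.sum_sub_distrib, ← Finset.sum_div,
      ← Finset.sum_div, ← add_pow, ← add_pow, div_sub_div_same]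
    ring_nf
  have hA : (r + 1 + s) ^ 2 = (2 * r + 2) * (r + 1 + s) - (r ^ 2 + 2 * r - 1) := by
    linear_combination hs
  have hB : (r + 1 - s) ^ 2 = (2 * r + 2) * (r + 1 - s) - (r ^ 2 + 2 * r - 1) := by
    linear_combination hs
  refine ⟨by simp [hb, hP0], by simp [hb, Finset.sum_range_succ, hP0, hP1], ?_⟩
  intro n hn
  obtain ⟨m, rfl⟩ : ∃ m, n = m + 2 := ⟨n - 2, by omega⟩
  have hnum : (r + 1 + s) ^ (m + 2) - (r + 1 - s) ^ (m + 2) =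
      (2 * r + 2) * ((r + 1 + s) ^ (m + 1) - (r + 1 - s) ^ (m + 1))
        - (r ^ 2 + 2 * r - 1) * ((r + 1 + s) ^ m - (r + 1 - s) ^ m) := by
    linear_combination (r + 1 + s) ^ m * hA - (r + 1 - s) ^ m * hB
  rw [show m + 2 - 1 = m + 1 from rfl, show m + 2 - 2 = m from rfl,
    hbc (m + 2), hbc (m + 1), hbc m]
  field_simp
  linear_combination hnum
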